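/- Let O_1, …, O_n be pairwise incomparable valuation subrings of a field K, with m_i the maximal ideal of O_i. Then for any elements c_1, …, c_n with c_i ∈ O_i for each i, there exists b ∈ O_1 ∩ ⋯ ∩ O_n such that b − c_i ∈ m_i for every i. (Equivalently, the map from O_1 ∩ ⋯ ∩ O_n to the product of the residue fields k_1 × ⋯ × k_n is surjective.) -/

import Mathlib

open Finset

section helpers

variable {K : Type*} [Field K]

private lemma val_one_lt_of_not_mem (A : ValuationSubring K) {x : K} (h : x ∉ A) :
    1 < A.valuation x :=
  not_le.mp fun hle => h (A.mem_of_valuation_le_one x hle)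

/-- Pair lemma: for incomparable valuation subrings `A, B` and `c ∈ A`, there is `w`
small at `A` and bigger than both `1` and `c` at `B`. -/
private lemma pair_lemma {A B : ValuationSubring K} (hAB : ¬ A ≤ B) (hBA : ¬ B ≤ A)
    {c : K} (hc : c ∈ A) :
    ∃ w : K, A.valuation w < 1 ∧ 1 < B.valuation w ∧ B.valuation c < B.valuation w := by
  obtain ⟨q, hqA, hqB⟩ := SetLike.not_le_iff_exists.mp hAB
  obtain ⟨p, hpB, hpA⟩ := SetLike.not_le_iff_exists.mp hBA
  have hp0 : (p : K) ≠ 0 := fun h => hpA (h ▸ A.zero_mem)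
  have hAp : 1 < A.valuation p := val_one_lt_of_not_mem A hpA
  have hBq : 1 < B.valuation q := val_one_lt_of_not_mem B hqB
  have hAq : A.valuation q ≤ 1 := (A.valuation_le_one_iff q).mpr hqA
  have hBp : B.valuation p ≤ 1 := (B.valuation_le_one_iff p).mpr hpB
  have hAp0 : A.valuation p ≠ 0 := by
    simpa using hp0
  have hBp0 : B.valuation p ≠ 0 := by
    simpa using hp0
  have hAz : A.valuation (q * p⁻¹) < 1 := by
    rw [Valuation.map_mul, map_inv₀]
    calc A.valuation q * (A.valuation p)⁻¹ ≤ 1 * (A.valuation p)⁻¹ :=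
          mul_le_mul_left hAq _
      _ = (A.valuation p)⁻¹ := one_mul _
      _ < 1 := by
          rw [inv_lt_one₀ (zero_lt_iff.mpr hAp0)]
          exact hAp
  have hBz : 1 < B.valuation (q * p⁻¹) := by
    rw [Valuation.map_mul, map_inv₀]
    have h1 : (1 : _) ≤ (B.valuation p)⁻¹ := by
      rw [one_le_inv₀ (zero_lt_iff.mpr hBp0)]
      exact hBp
    calc (1 : _) < B.valuation q := hBq
      _ = B.valuation q * 1 := (mul_one _).symm
      _ ≤ B.valuation q * (B.valuation p)⁻¹ := mul_le_mul_right h1 _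
  rcases le_or_gt (B.valuation c) 1 with hcB | hcB
  · exact ⟨q * p⁻¹, hAz, hBz, lt_of_le_of_lt hcB hBz⟩
  · refine ⟨q * p⁻¹ * c ^ 2, ?_, ?_, ?_⟩
    · rw [Valuation.map_mul, Valuation.map_pow]
      have hAc : A.valuation c ≤ 1 := (A.valuation_le_one_iff c).mpr hc
      calc A.valuation (q * p⁻¹) * A.valuation c ^ 2
          ≤ A.valuation (q * p⁻¹) * 1 := mul_le_mul_right (pow_le_one₀ zero_le' hAc) _
        _ = A.valuation (q * p⁻¹) := mul_one _
        _ < 1 := hAz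
    · rw [Valuation.map_mul, Valuation.map_pow]
      have h2 : 1 < B.valuation c ^ 2 := one_lt_pow₀ hcB (by norm_num)
      calc (1 : _) < B.valuation c ^ 2 := h2
        _ = 1 * B.valuation c ^ 2 := (one_mul _).symm
        _ ≤ B.valuation (q * p⁻¹) * B.valuation c ^ 2 := mul_le_mul_left hBz.le _
    · rw [Valuation.map_mul, Valuation.map_pow]
      have hc0 : (0 : _) < B.valuation c := lt_trans zero_lt_one hcB
      have h3 : B.valuation c < B.valuation c ^ 2 := by
        calc B.valuation c = B.valuation c * 1 := (mul_one _).symm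
          _ < B.valuation c * B.valuation c := mul_lt_mul_of_pos_left hcB hc0
          _ = B.valuation c ^ 2 := (sq _).symm
      calc B.valuation c < B.valuation c ^ 2 := h3
        _ = 1 * B.valuation c ^ 2 := (one_mul _).symm
        _ ≤ B.valuation (q * p⁻¹) * B.valuation c ^ 2 := mul_le_mul_left hBz.le _

/-- Key lemma: if `A` is incomparable with each member of a finite family, and `c ∈ A`,
then there is `z` small at `A` and bigger than both `1` and `c` at each member. -/
private lemma key_lemma {ι : Type*} [DecidableEq ι] (O : ι → ValuationSubring K)
    (A : ValuationSubring K) (c : K) (hc : c ∈ A) (s : Finset ι)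
    :
    (∀ i ∈ s, ¬ A ≤ O i) → (∀ i ∈ s, ¬ O i ≤ A) →
    ∃ z : K, A.valuation z < 1 ∧
      ∀ i ∈ s, 1 < (O i).valuation z ∧ (O i).valuation c < (O i).valuation z := by
  classical
  induction s using Finset.induction_on with
  | empty => exact fun _ _ => ⟨0, by simp, by simp⟩
  | @insert i₀ s' hi₀ ih =>
    intro h1 h2
    obtain ⟨z', hz'A, hz's⟩ := ih (fun i hi => h1 i (mem_insert_of_mem hi))
      (fun i hi => h2 i (mem_insert_of_mem hi))
    clear ih
    obtain ⟨w, hwA, hwB, hwc⟩ :=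
      pair_lemma (h1 i₀ (mem_insert_self i₀ s')) (h2 i₀ (mem_insert_self i₀ s')) hc
    -- choose the exponent N avoiding coincidences of values
    set f : ι → ℕ := fun i =>
      if h : ∃ m : ℕ, ((O i).valuation z') ^ m = (O i).valuation w then h.choose else 0
      with hf
    set N : ℕ := (insert i₀ s').sup f + 1 with hN
    have hN0 : N ≠ 0 := Nat.succ_ne_zero _
    have hdist : ∀ i ∈ insert i₀ s',
        ((O i).valuation z') ^ N ≠ (O i).valuation w := by
      intro i hi hEq
      have hex : ∃ m : ℕ, ((O i).valuation z') ^ m = (O i).valuation w := ⟨N, hEq⟩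
      have hfi : ((O i).valuation z') ^ (f i) = (O i).valuation w := by
        rw [hf]; simp only [dif_pos hex]; exact hex.choose_spec
      have hflt : f i < N := Nat.lt_succ_of_le (Finset.le_sup hi)
      have hgt1 : 1 < (O i).valuation z' := by
        rcases mem_insert.mp hi with rfl | hi'
        · -- i = i₀ : rule out (O i₀).valuation z' ≤ 1
          by_contra hle
          push_neg at hle
          have : ((O i).valuation z') ^ N ≤ 1 := pow_le_one₀ zero_le' hle
          exact absurd (hEq ▸ this) (not_le.mpr hwB)
        · exact (hz's i hi').1
      exact absurd (hfi.trans hEq.symm)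
        (ne_of_lt (pow_lt_pow_right₀ hgt1 hflt))
    refine ⟨z' ^ N + w, ?_, ?_⟩
    · calc A.valuation (z' ^ N + w) ≤ max (A.valuation (z' ^ N)) (A.valuation w) :=
            Valuation.map_add _ _ _
        _ < 1 := by
            rw [Valuation.map_pow]
            exact max_lt (pow_lt_one₀ zero_le' hz'A hN0) hwA
    · intro i hi
      have hmax : (O i).valuation (z' ^ N + w)
          = max ((O i).valuation (z' ^ N)) ((O i).valuation w) := by
        apply Valuation.map_add_of_distinct_val
        rw [Valuation.map_pow]
        exact hdist i hi
      rw [hmax, Valuation.map_pow]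
      rcases mem_insert.mp hi with rfl | hi'
      · constructor
        · exact lt_max_of_lt_right hwB
        · exact lt_max_of_lt_right hwc
      · have hz1 : 1 < (O i).valuation z' := (hz's i hi').1
        have hself : (O i).valuation z' ≤ ((O i).valuation z') ^ N :=
          le_self_pow₀ hz1.le hN0
        constructor
        · exact lt_max_of_lt_left (lt_of_lt_of_le hz1 hself)
        · exact lt_max_of_lt_left (lt_of_lt_of_le (hz's i hi').2 hself)

end helpers

/-- Chinese remainder theorem for pairwise incomparable valuation subrings: let
`O_1, …, O_n` be pairwise incomparable valuation subrings of a field `K`, with `m_i` the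
maximal ideal of `O_i`.  For any `c_1, …, c_n` with `c_i ∈ O_i`, there exists
`b ∈ O_1 ∩ ⋯ ∩ O_n` with `b − c_i ∈ m_i` for every `i` (membership in `m_i` is expressed
via `(O i).nonunits`). -/
theorem chinese_remainder_for_incomparable_valuationSubrings
    {K : Type*} [Field K] (n : ℕ) (hn : 0 < n)
    (O : Fin n → ValuationSubring K)
    (hincomp : ∀ i j, i ≠ j → ¬ O i ≤ O j)
    (c : Fin n → K) (hc : ∀ i, c i ∈ O i) :
    ∃ b : K, (∀ i, b ∈ O i) ∧ ∀ i, b - c i ∈ (O i).nonunits := by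
  classical
  -- for each i, get z i small at O i, huge (bigger than c i) at all other places
  have hz : ∀ i : Fin n, ∃ z : K, (O i).valuation z < 1 ∧
      ∀ j, j ≠ i → 1 < (O j).valuation z ∧ (O j).valuation (c i) < (O j).valuation z := by
    intro i
    obtain ⟨z, hzA, hzs⟩ := key_lemma O (O i) (c i) (hc i) (Finset.univ.erase i)
      (fun j hj => hincomp i j (Finset.ne_of_mem_erase hj).symm)
      (fun j hj => hincomp j i (Finset.ne_of_mem_erase hj))
    exact ⟨z, hzA, fun j hj => hzs j (Finset.mem_erase.mpr ⟨hj, Finset.mem_univ j⟩)⟩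
  choose z hzA hzB using hz
  -- basic valuation facts about 1 + z i
  have hv1 : ∀ i, (O i).valuation (1 + z i) = 1 := fun i =>
    Valuation.map_one_add_of_lt _ (hzA i)
  have hvj : ∀ i j, j ≠ i → (O j).valuation (1 + z i) = (O j).valuation (z i) := by
    intro i j hj
    have h := Valuation.map_add_of_distinct_val (v := (O j).valuation)
      (x := (1 : K)) (y := z i) (by rw [Valuation.map_one]; exact ne_of_lt (hzB i j hj).1)
    rw [h, Valuation.map_one, max_eq_right (hzB i j hj).1.le]
  -- each summand is small at foreign places
  have hterm_lt : ∀ i j, j ≠ i → (O j).valuation ((1 + z i)⁻¹ * c i) < 1 := by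
    intro i j hj
    rw [Valuation.map_mul, map_inv₀, hvj i j hj]
    have hz0 : (0 : _) < (O j).valuation (z i) := lt_trans zero_lt_one (hzB i j hj).1
    have : (O j).valuation (z i) * ((O j).valuation (z i))⁻¹ = 1 :=
      mul_inv_cancel₀ (ne_of_gt hz0)
    calc ((O j).valuation (z i))⁻¹ * (O j).valuation (c i)
        = (O j).valuation (c i) * ((O j).valuation (z i))⁻¹ := mul_comm _ _
      _ < (O j).valuation (z i) * ((O j).valuation (z i))⁻¹ :=
          mul_lt_mul_of_pos_right (hzB i j hj).2 (by
            rw [zero_lt_iff]; exact inv_ne_zero (ne_of_gt hz0))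
      _ = 1 := this
  have hterm_le : ∀ i j, (O j).valuation ((1 + z i)⁻¹ * c i) ≤ 1 := by
    intro i j
    rcases eq_or_ne j i with rfl | hj
    · rw [Valuation.map_mul, map_inv₀, hv1 j, inv_one, one_mul]
      exact (O j).valuation_le_one ⟨c j, hc j⟩
    · exact (hterm_lt i j hj).le
  refine ⟨∑ i, (1 + z i)⁻¹ * c i, ?_, ?_⟩
  · intro k
    apply (O k).mem_of_valuation_le_one
    exact Valuation.map_sum_le _ (fun i _ => hterm_le i k)
  · intro k
    rw [ValuationSubring.mem_nonunits_iff]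
    have hsplit : (∑ i, (1 + z i)⁻¹ * c i) - c k
        = ∑ i, ((1 + z i)⁻¹ * c i - if i = k then c k else 0) := by
      rw [Finset.sum_sub_distrib, Finset.sum_ite_eq' Finset.univ k (fun _ => c k)]
      simp
    rw [hsplit]
    apply Valuation.map_sum_lt _ one_ne_zero
    intro i _
    rcases eq_or_ne i k with rfl | hik
    · rw [if_pos rfl]
      have hrw : (1 + z i)⁻¹ * c i - c i = ((1 + z i)⁻¹ - 1) * c i := by ring
      have hne : (1 + z i) ≠ 0 := by
        intro h0
        have := hv1 i
        rw [h0, Valuation.map_zero] at this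
        exact zero_ne_one this
      have hrw2 : (1 + z i)⁻¹ - 1 = -z i * (1 + z i)⁻¹ := by
        field_simp
        ring
      have hval : (O i).valuation ((1 + z i)⁻¹ - 1) = (O i).valuation (z i) := by
        rw [hrw2, Valuation.map_mul, Valuation.map_neg, map_inv₀, hv1 i, inv_one, mul_one]
      rw [hrw, Valuation.map_mul, hval]
      calc (O i).valuation (z i) * (O i).valuation (c i)
          ≤ (O i).valuation (z i) * 1 :=
            mul_le_mul_right ((O i).valuation_le_one ⟨c i, hc i⟩) _
        _ = (O i).valuation (z i) := mul_one _
        _ < 1 := hzA i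
    · simp only [if_neg hik, sub_zero]
      exact hterm_lt i k hik.symm
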